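/- If a connected finite simple graph G satisfies: (i) the minimum degree of G is at least 2; (ii) G is bipartite; and (iii) every edge of G is incident with a vertex of degree 2 in G, then G is a minimal (2,2)-dominated graph. -/

import Mathlib

/-- The degree of a vertex, as the cardinality of its neighbor set. -/
noncomputable def deg {V : Type*} [Fintype V] (G : SimpleGraph V) (v : V) : ℕ :=
  (G.neighborSet v).ncard

/-- `D` is a `k`-dominating set of `G`: every vertex outside `D`
has at least `k` neighbors in `D`. -/
def KDomSet {V : Type*} [Fintype V] (G : SimpleGraph V) (k : ℕ) (D : Set V) : Prop :=
  ∀ v ∉ D, k ≤ (G.neighborSet v ∩ D).ncard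

/-- `(D₁, D₂)` is a `(k,ℓ)`-pair in `G`: `D₁` and `D₂` are disjoint proper subsets of the
vertex set, `D₁` is `k`-dominating and `D₂` is `ℓ`-dominating. -/
def KLPair {V : Type*} [Fintype V] (G : SimpleGraph V) (k ℓ : ℕ) (D₁ D₂ : Set V) : Prop :=
  Disjoint D₁ D₂ ∧ D₁ ≠ Set.univ ∧ D₂ ≠ Set.univ ∧ KDomSet G k D₁ ∧ KDomSet G ℓ D₂

/-- `G` is a `(k,ℓ)`-dominated graph: it contains a `(k,ℓ)`-pair. -/
def KLDominated {V : Type*} [Fintype V] (G : SimpleGraph V) (k ℓ : ℕ) : Prop :=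
  ∃ D₁ D₂ : Set V, KLPair G k ℓ D₁ D₂

/-- `G` is bipartite with partite sets `A` and `B`. -/
def BipartiteWith {V : Type*} (G : SimpleGraph V) (A B : Set V) : Prop :=
  A ∪ B = Set.univ ∧ A ∩ B = ∅ ∧
    ∀ ⦃u v⦄, G.Adj u v → (u ∈ A ∧ v ∈ B) ∨ (u ∈ B ∧ v ∈ A)

/-- `G` is bipartite. -/
def IsBipartite {V : Type*} (G : SimpleGraph V) : Prop :=
  ∃ A B : Set V, BipartiteWith G A B

/-- A connected graph `G` is a minimal `(2,2)`-dominated graph if `G` is `(2,2)`-dominated and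
no proper spanning subgraph of `G` is `(2,2)`-dominated. -/
def Minimal22 {V : Type*} [Fintype V] (G : SimpleGraph V) : Prop :=
  G.Connected ∧ KLDominated G 2 2 ∧ ∀ H : SimpleGraph V, H < G → ¬ KLDominated H 2 2

/-- A connected graph with minimum degree at least 2 that is bipartite and in which every edge
is incident with a vertex of degree 2 is a minimal (2,2)-dominated graph. -/
theorem stmt_6 {V : Type*} [Fintype V] (G : SimpleGraph V) (hconn : G.Connected)
    (hδ : ∀ v : V, 2 ≤ deg G v) (hbip : IsBipartite G)
    (hedge : ∀ u v : V, G.Adj u v → deg G u = 2 ∨ deg G v = 2) :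
    Minimal22 G := by
  obtain ⟨A, B, hAB, hABempty, hadjAB⟩ := hbip
  have hne : Nonempty V := hconn.nonempty
  obtain ⟨v₀⟩ := hne
  have h2 : 2 ≤ (G.neighborSet v₀).ncard := hδ v₀
  have hnsne : (G.neighborSet v₀).Nonempty := by
    rw [Set.nonempty_iff_ne_empty]
    intro h
    rw [h, Set.ncard_empty] at h2
    omega
  obtain ⟨w₀, hw₀⟩ := hnsne
  have hadj0 : G.Adj v₀ w₀ := hw₀
  have hdisj : Disjoint A B := Set.disjoint_iff_inter_eq_empty.mpr hABempty
  have hAne : A.Nonempty := by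
    rcases hadjAB hadj0 with ⟨h1, _⟩ | ⟨_, h2'⟩
    exacts [⟨v₀, h1⟩, ⟨w₀, h2'⟩]
  have hBne : B.Nonempty := by
    rcases hadjAB hadj0 with ⟨_, h1⟩ | ⟨h2', _⟩
    exacts [⟨w₀, h1⟩, ⟨v₀, h2'⟩]
  have hdomA : KDomSet G 2 A := by
    intro v hv
    have hsub : G.neighborSet v ⊆ A := by
      intro u hu
      rcases hadjAB (hu : G.Adj v u) with ⟨h1, _⟩ | ⟨_, h2'⟩
      · exact absurd h1 hv
      · exact h2'
    rw [Set.inter_eq_self_of_subset_left hsub]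
    exact hδ v
  have hdomB : KDomSet G 2 B := by
    intro v hv
    have hvA : v ∈ A := by
      have hu : v ∈ A ∪ B := hAB ▸ Set.mem_univ v
      rcases hu with h | h
      · exact h
      · exact absurd h hv
    have hsub : G.neighborSet v ⊆ B := by
      intro u hu
      rcases hadjAB (hu : G.Adj v u) with ⟨_, h1⟩ | ⟨h2', _⟩
      · exact h1
      · exact absurd h2' hv
    rw [Set.inter_eq_self_of_subset_left hsub]
    exact hδ v
  refine ⟨hconn, ⟨A, B, hdisj, ?_, ?_, hdomA, hdomB⟩, ?_⟩
  · intro h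
    obtain ⟨b, hb⟩ := hBne
    exact Set.disjoint_left.mp hdisj (h ▸ Set.mem_univ b) hb
  · intro h
    obtain ⟨a, ha⟩ := hAne
    exact Set.disjoint_left.mp hdisj ha (h ▸ Set.mem_univ a)
  · rintro H hH ⟨D₁, D₂, hd, -, -, h1, h2'⟩
    have hle : H ≤ G := hH.le
    have hnle : ¬ G ≤ H := hH.2
    have hex : ∃ u v, G.Adj u v ∧ ¬ H.Adj u v := by
      by_contra hc
      push_neg at hc
      exact hnle fun u v huv => hc u v huv
    obtain ⟨u, v, huv, hnuv⟩ := hex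
    have hdegH : ∀ w, 2 ≤ (H.neighborSet w).ncard := by
      intro w
      by_cases hw : w ∈ D₁
      · have hw2 : w ∉ D₂ := fun h => Set.disjoint_left.mp hd hw h
        calc 2 ≤ (H.neighborSet w ∩ D₂).ncard := h2' w hw2
          _ ≤ (H.neighborSet w).ncard :=
            Set.ncard_le_ncard Set.inter_subset_left (Set.toFinite _)
      · calc 2 ≤ (H.neighborSet w ∩ D₁).ncard := h1 w hw
          _ ≤ (H.neighborSet w).ncard :=
            Set.ncard_le_ncard Set.inter_subset_left (Set.toFinite _)
    have key : ∀ x y : V, G.Adj x y → ¬ H.Adj x y → deg G x = 2 → False := by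
      intro x y hxy hnxy hdx
      have hsub : H.neighborSet x ⊆ G.neighborSet x \ {y} := by
        intro z hz
        refine ⟨hle hz, ?_⟩
        rintro rfl
        exact hnxy hz
      have hcount : (G.neighborSet x \ {y}).ncard = 1 := by
        have hy : y ∈ G.neighborSet x := hxy
        rw [Set.ncard_diff_singleton_of_mem hy]
        simp [deg] at hdx
        omega
      have := Set.ncard_le_ncard hsub (Set.toFinite _)
      rw [hcount] at this
      have := hdegH x
      omega
    rcases hedge u v huv with h | h
    · exact key u v huv hnuv h
    · exact key v u huv.symm (fun hh => hnuv hh.symm) h
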